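/- arXiv:2307.00098 — 7 statements merged into one kernel-verified Lean document; each statement's English description precedes it below -/
import Mathlib

section
/- For a formal power series g(x) over a commutative ring and scalars r, s, the r-th binomial transform commutes with the s-INVERT transform: applying g ↦ (1/(1-rx))·g(x/(1-rx)) and then g ↦ g/(1 - s·x·g) gives the same result as applying them in the opposite order. -/
open PowerSeries

/-- Composition (substitution) of formal power series, meaningful when the
second argument has zero constant term. -/
noncomputable def psComp {K : Type*} [Field K] (f g : K⟦X⟧) : K⟦X⟧ :=
  PowerSeries.mk fun n => ∑ k ∈ Finset.range (n + 1), coeff k f * coeff n (g ^ k)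

/-- The `r`-th binomial transform: `g(x) ↦ (1/(1-rx)) · g(x/(1-rx))`. -/
noncomputable def binomT {K : Type*} [Field K] (r : K) (g : K⟦X⟧) : K⟦X⟧ :=
  (1 - C r * X)⁻¹ * psComp g (X * (1 - C r * X)⁻¹)

/-- The `s`-INVERT transform: `g(x) ↦ g(x)/(1 - s·x·g(x))`. -/
noncomputable def invertT {K : Type*} [Field K] (s : K) (g : K⟦X⟧) : K⟦X⟧ :=
  g * (1 - C s * X * g)⁻¹

section Aux

variable {K : Type*} [Field K]

lemma aux_coeff_pow_eq_zero {u : K⟦X⟧} (hu : constantCoeff u = 0) {n k : ℕ} (h : n < k) :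
    coeff n (u ^ k) = 0 := by
  have hd : (X : K⟦X⟧) ^ k ∣ u ^ k := pow_dvd_pow_of_dvd (X_dvd_iff.mpr hu) k
  exact (X_pow_dvd_iff.mp hd) n h

lemma aux_coeff_eval₂ {u : K⟦X⟧} (hu : constantCoeff u = 0) (p : Polynomial K) (n : ℕ) :
    coeff n (p.eval₂ C u) = ∑ k ∈ Finset.range (n + 1), p.coeff k * coeff n (u ^ k) := by
  rw [Polynomial.eval₂_eq_sum, Polynomial.sum_def, map_sum]
  simp only [map_mul, coeff_C_mul]
  rw [show (∑ k ∈ p.support, p.coeff k * coeff n (u ^ k))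
      = ∑ k ∈ p.support ∪ Finset.range (n + 1), p.coeff k * coeff n (u ^ k) from
    Finset.sum_subset Finset.subset_union_left (fun k _ hk => by
      rw [Polynomial.notMem_support_iff.mp hk, zero_mul])]
  exact (Finset.sum_subset Finset.subset_union_right (fun k _ hk => by
    rw [aux_coeff_pow_eq_zero hu (by simpa using hk), mul_zero])).symm

lemma aux_coeff_psComp {u : K⟦X⟧} (hu : constantCoeff u = 0) (f : K⟦X⟧) {n m : ℕ}
    (h : n < m) :
    coeff n (psComp f u) = coeff n ((trunc m f).eval₂ C u) := by
  rw [aux_coeff_eval₂ hu, psComp, coeff_mk]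
  refine Finset.sum_congr rfl fun k hk => ?_
  rw [coeff_trunc, if_pos (lt_of_lt_of_le (Finset.mem_range.mp hk) h)]

lemma psComp_mul {u : K⟦X⟧} (hu : constantCoeff u = 0) (f g : K⟦X⟧) :
    psComp (f * g) u = psComp f u * psComp g u := by
  ext n
  rw [aux_coeff_psComp hu _ (Nat.lt_succ_self n)]
  have key : coeff n ((trunc (n+1) (f * g)).eval₂ C u)
      = coeff n (((trunc (n+1) f) * (trunc (n+1) g)).eval₂ C u) := by
    rw [aux_coeff_eval₂ hu, aux_coeff_eval₂ hu]
    refine Finset.sum_congr rfl fun k hk => ?_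
    have hk' : k < n + 1 := Finset.mem_range.mp hk
    congr 1
    rw [coeff_trunc, if_pos hk', PowerSeries.coeff_mul, Polynomial.coeff_mul]
    refine Finset.sum_congr rfl fun p hp => ?_
    have hpk := Finset.HasAntidiagonal.mem_antidiagonal.mp hp
    rw [coeff_trunc, coeff_trunc, if_pos, if_pos]
    · omega
    · omega
  rw [key, Polynomial.eval₂_mul, PowerSeries.coeff_mul, PowerSeries.coeff_mul]
  refine Finset.sum_congr rfl fun p hp => ?_
  have hpn := Finset.HasAntidiagonal.mem_antidiagonal.mp hp
  rw [aux_coeff_psComp hu f (show p.1 < n + 1 by omega),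
      aux_coeff_psComp hu g (show p.2 < n + 1 by omega)]

lemma psComp_sub (u f g : K⟦X⟧) : psComp (f - g) u = psComp f u - psComp g u := by
  ext n
  simp [psComp, coeff_mk, sub_mul, Finset.sum_sub_distrib]

lemma psComp_C (u : K⟦X⟧) (a : K) : psComp (C a) u = C a := by
  ext n
  rw [psComp, coeff_mk]
  rw [Finset.sum_eq_single 0]
  · simp [coeff_C]
  · intro k _ hk
    simp [coeff_C, hk]
  · simp

lemma psComp_one (u : K⟦X⟧) : psComp 1 u = 1 := by
  have := psComp_C u 1
  simpa using this

lemma psComp_X {u : K⟦X⟧} (hu : constantCoeff u = 0) : psComp X u = u := by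
  ext n
  rw [psComp, coeff_mk]
  rcases Nat.eq_zero_or_pos n with h | h
  · subst h
    simpa [coeff_X] using hu.symm
  · rw [Finset.sum_eq_single 1]
    · simp [coeff_X]
    · intro k _ hk
      simp [coeff_X, hk]
    · intro h1
      exact absurd (Finset.mem_range.mpr (by omega)) h1

lemma constantCoeff_psComp (u f : K⟦X⟧) :
    constantCoeff (psComp f u) = constantCoeff f := by
  have : coeff 0 (psComp f u) = coeff 0 f := by
    rw [psComp, coeff_mk]
    simp
  simpa using this

lemma psComp_inv {u f : K⟦X⟧} (hu : constantCoeff u = 0)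
    (hf : constantCoeff f ≠ 0) : psComp f⁻¹ u = (psComp f u)⁻¹ := by
  have h1 : constantCoeff (psComp f u) ≠ 0 := by
    rwa [constantCoeff_psComp]
  rw [PowerSeries.eq_inv_iff_mul_eq_one h1, ← psComp_mul hu,
    PowerSeries.inv_mul_cancel _ hf, psComp_one]

end Aux

theorem binomT_invertT_comm {K : Type*} [Field K] (r s : K) (g : K⟦X⟧) :
    binomT r (invertT s g) = invertT s (binomT r g) := by
  set A : K⟦X⟧ := (1 - C r * X)⁻¹ with hA
  set u : K⟦X⟧ := X * A with hu_def
  have hu : constantCoeff u = 0 := by simp [hu_def]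
  set h : K⟦X⟧ := 1 - C s * X * g with hh
  have h0 : constantCoeff h ≠ 0 := by simp [hh]
  have Sh : psComp h u = 1 - C s * u * psComp g u := by
    rw [hh, psComp_sub, psComp_one, mul_assoc, mul_assoc,
      psComp_mul hu, psComp_mul hu, psComp_C, psComp_X hu]
  have hSg0 : constantCoeff (1 - C s * u * psComp g u) = 1 := by
    simp [hu]
  have lhs : binomT r (invertT s g) =
      A * (psComp g u * (1 - C s * u * psComp g u)⁻¹) := by
    rw [binomT, invertT, ← hA, ← hu_def, ← hh, psComp_mul hu, psComp_inv hu h0, Sh]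
  rw [lhs, invertT, binomT, ← hA, ← hu_def]
  have : C s * X * (A * psComp g u) = C s * u * psComp g u := by
    rw [hu_def]; ring
  rw [this]
  ring
end

section
/- Let g be a formal power series with constant term 1 satisfying the continued-fraction recursion g = 1/(1 − α₁x − β₁x²h) where h is another power series with constant term 1. Then g/(1 − s·x·g) = 1/(1 − (α₁+s)x − β₁x²h); i.e., the s-INVERT transform adds s to the first Jacobi coefficient α₁. -/
open PowerSeries

/-- The mean-INVERT transform: `g(x) ↦ g(x)/(1 - r·x²·g(x)²)`. -/
noncomputable def minvertT {K : Type*} [Field K] (r : K) (g : K⟦X⟧) : K⟦X⟧ :=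
  g * (1 - C r * X ^ 2 * g ^ 2)⁻¹

theorem invertT_jacobi {K : Type*} [Field K] (α₁ β₁ s : K) (g h : K⟦X⟧)
    (hg0 : constantCoeff g = 1) (hh0 : constantCoeff h = 1)
    (hg : g * (1 - C α₁ * X - C β₁ * X ^ 2 * h) = 1) :
    invertT s g * (1 - C (α₁ + s) * X - C β₁ * X ^ 2 * h) = 1 := by
  have hunit : constantCoeff (1 - C s * X * g) ≠ 0 := by
    simp [hg0]
  have hkey : g * (1 - C (α₁ + s) * X - C β₁ * X ^ 2 * h)
      = 1 - C s * X * g := by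
    have : (1 - C (α₁ + s) * X - C β₁ * X ^ 2 * h)
        = (1 - C α₁ * X - C β₁ * X ^ 2 * h) - C s * X := by
      simp [map_add]; ring
    rw [this, mul_sub, hg]; ring
  have hinv : (1 - C s * X * g)⁻¹ * (1 - C s * X * g) = 1 :=
    PowerSeries.inv_mul_cancel _ hunit
  calc invertT s g * (1 - C (α₁ + s) * X - C β₁ * X ^ 2 * h)
      = (1 - C s * X * g)⁻¹ * (g * (1 - C (α₁ + s) * X - C β₁ * X ^ 2 * h)) := by
        rw [invertT]; ring
    _ = 1 := by rw [hkey, hinv]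
end

section
/- Let g be the formal power series with constant term 1 satisfying g = 1/(1 − αx − βx²g) (constant-coefficient Jacobi continued fraction). Then the mean-INVERT transform MINVERT_r(g) = g/(1 − r·x²·g²) satisfies MINVERT_r(g) = 1/(1 − αx − (β+r)·x²·g); i.e., it adds r to the first β-coefficient of the continued fraction. -/
open PowerSeries

theorem minvertT_jacobi {K : Type*} [Field K] (α β r : K) (g : K⟦X⟧)
    (hg0 : constantCoeff g = 1)
    (hg : g * (1 - C α * X - C β * X ^ 2 * g) = 1) :
    minvertT r g * (1 - C α * X - C (β + r) * X ^ 2 * g) = 1 := by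
  set u : K⟦X⟧ := 1 - C r * X ^ 2 * g ^ 2 with hu_def
  have hu0 : constantCoeff u ≠ 0 := by
    simp [hu_def, hg0]
  have huinv : u⁻¹ * u = 1 := PowerSeries.inv_mul_cancel _ hu0
  have key : g * (1 - C α * X - C (β + r) * X ^ 2 * g) = u := by
    rw [map_add, hu_def]
    linear_combination hg
  rw [minvertT, mul_comm g, mul_assoc, key, huinv]
end

section
/- Let g = g_{α,β} satisfy g = 1/(1 − αx − βx²g) with g(0) = 1. Then the composite transform INVERT_{−a}(MINVERT_{p−q}(g_{a,q})) equals the free Meixner moment generating function m_{p,q,a}, i.e., the series M with M = 1/(1 − p·x²·G) where G satisfies G = 1/(1 − ax − q·x²·G). -/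
open PowerSeries

theorem free_meixner_transform {K : Type*} [Field K] (p q a : K) (G : K⟦X⟧)
    (hG0 : constantCoeff G = 1)
    (hG : G * (1 - C a * X - C q * X ^ 2 * G) = 1) :
    invertT (-a) (minvertT (p - q) G) = (1 - C p * X ^ 2 * G)⁻¹ := by
  set A : K⟦X⟧ := 1 - C (p - q) * X ^ 2 * G ^ 2 with hAdef
  have hA0 : constantCoeff A = 1 := by simp [hAdef]
  have hAinv : A * A⁻¹ = 1 :=
    PowerSeries.mul_inv_cancel _ (by rw [hA0]; exact one_ne_zero)
  set E : K⟦X⟧ := G * (1 - C p * X ^ 2 * G) with hEdef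
  have hE : E = A + C a * X * G := by
    rw [hEdef, hAdef, map_sub]; linear_combination hG
  have hEA0 : constantCoeff (E * A⁻¹) ≠ 0 := by
    have h1 : constantCoeff A * constantCoeff A⁻¹ = 1 := by
      rw [← map_mul, hAinv, map_one]
    have h2 : constantCoeff A⁻¹ = 1 := by rw [hA0, one_mul] at h1; exact h1
    simp [hEdef, hG0, h2]
  have hP0 : constantCoeff (1 - C p * X ^ 2 * G) ≠ 0 := by simp
  rw [PowerSeries.eq_inv_iff_mul_eq_one hP0]
  unfold invertT minvertT
  have hB : 1 - C (-a) * X * (G * A⁻¹) = E * A⁻¹ := by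
    calc 1 - C (-a) * X * (G * A⁻¹) = A * A⁻¹ + C a * X * G * A⁻¹ := by
          rw [hAinv, map_neg]; ring
      _ = E * A⁻¹ := by rw [hE]; ring
  rw [← hAdef, hB]
  calc G * A⁻¹ * (E * A⁻¹)⁻¹ * (1 - C p * X ^ 2 * G)
      = (E * A⁻¹) * (E * A⁻¹)⁻¹ := by rw [hEdef]; ring
    _ = 1 := PowerSeries.mul_inv_cancel _ hEA0
end

section
/- If a sequence aₙ has generating function given by the Jacobi continued fraction with constant coefficients α on the x-terms and β on the x²-terms (i.e., ∑aₙxⁿ = g where g = 1/(1 − αx − βx²g)), then the Hankel determinant hₙ = det(a_{i+j})_{0≤i,j≤n} equals β^{C(n+1,2)} = β^{n(n+1)/2}. -/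
open PowerSeries Finset

/-- Weighted Motzkin path coefficients: number (weight) of paths of length `i`
from height 0 to height `k`, as `coeff i (g^(k+1) * X^k)`. -/
noncomputable def hc {K : Type*} [Field K] (g : K⟦X⟧) (i k : ℕ) : K :=
  coeff i (g ^ (k + 1) * X ^ k)

lemma hc_eq_zero {K : Type*} [Field K] (g : K⟦X⟧) {i k : ℕ} (h : i < k) : hc g i k = 0 := by
  rw [hc, coeff_mul_X_pow', if_neg (by omega)]

lemma hc_diag {K : Type*} [Field K] {g : K⟦X⟧} (hg0 : constantCoeff g = 1) (i : ℕ) :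
    hc g i i = 1 := by
  rw [hc, coeff_mul_X_pow', if_pos le_rfl, Nat.sub_self, coeff_zero_eq_constantCoeff_apply,
    map_pow, hg0, one_pow]

lemma hc_zero_right {K : Type*} [Field K] (g : K⟦X⟧) (i : ℕ) : hc g i 0 = coeff i g := by
  simp [hc]

lemma hc_zero_left {K : Type*} [Field K] {g : K⟦X⟧} (hg0 : constantCoeff g = 1) (k : ℕ) :
    hc g 0 k = if k = 0 then 1 else 0 := by
  rcases Nat.eq_zero_or_pos k with rfl | hk
  · simpa using hc_diag hg0 0
  · rw [hc_eq_zero g hk, if_neg (by omega)]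

lemma g_eq {K : Type*} [Field K] {α β : K} {g : K⟦X⟧}
    (hg : g * (1 - C α * X - C β * X ^ 2 * g) = 1) :
    g = 1 + C α * X * g + C β * X ^ 2 * g ^ 2 := by
  linear_combination hg

lemma g_pow_eq {K : Type*} [Field K] {α β : K} {g : K⟦X⟧}
    (hg : g * (1 - C α * X - C β * X ^ 2 * g) = 1) (k : ℕ) :
    g ^ (k + 1) * X ^ k = g ^ k * X ^ k + C α * (g ^ (k + 1) * X ^ (k + 1))
      + C β * (g ^ (k + 2) * X ^ (k + 2)) := by
  linear_combination (g ^ k * X ^ k) * g_eq hg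

lemma hc_rec {K : Type*} [Field K] {α β : K} {g : K⟦X⟧}
    (hg : g * (1 - C α * X - C β * X ^ 2 * g) = 1) (i k : ℕ) :
    hc g (i + 1) k = (if k = 0 then 0 else hc g i (k - 1)) + α * hc g i k + β * hc g i (k + 1) := by
  rcases k with _ | k
  · rw [if_pos rfl, hc_zero_right, hc_zero_right]
    conv_lhs => rw [g_eq hg]
    rw [map_add, map_add, coeff_one, if_neg (Nat.succ_ne_zero i),
      show C α * X * g = C α * g * X from by ring,
      show C β * X ^ 2 * g ^ 2 = C β * (g ^ 2 * X ^ 1) * X from by ring,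
      coeff_succ_mul_X, coeff_succ_mul_X, coeff_C_mul, coeff_C_mul]
    rw [hc]
  · have e := congrArg (coeff (i + 1)) (g_pow_eq hg (k + 1))
    rw [map_add, map_add, coeff_C_mul, coeff_C_mul,
      show g ^ (k + 1) * X ^ (k + 1) = g ^ (k + 1) * X ^ k * X from by ring,
      show g ^ (k + 1 + 1) * X ^ (k + 1 + 1) = g ^ (k + 1 + 1) * X ^ (k + 1) * X from by ring,
      show g ^ (k + 1 + 2) * X ^ (k + 1 + 2) = g ^ (k + 1 + 1 + 1) * X ^ (k + 1 + 1) * X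
        from by ring,
      coeff_succ_mul_X, coeff_succ_mul_X, coeff_succ_mul_X] at e
    rw [if_neg (Nat.succ_ne_zero k), Nat.add_sub_cancel]
    simp only [hc]
    rw [e]

lemma hc_swap {K : Type*} [Field K] {α β : K} {g : K⟦X⟧}
    (hg : g * (1 - C α * X - C β * X ^ 2 * g) = 1) (M i j : ℕ)
    (hi : i ≤ M) (hj : j ≤ M) :
    ∑ k ∈ range (M + 1), hc g (i + 1) k * β ^ k * hc g j k
      = ∑ k ∈ range (M + 1), hc g i k * β ^ k * hc g (j + 1) k := by
  have hL : ∑ k ∈ range (M + 1), hc g (i + 1) k * β ^ k * hc g j k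
      = (∑ k ∈ range (M + 1), (if k = 0 then 0 else hc g i (k - 1)) * β ^ k * hc g j k)
        + (∑ k ∈ range (M + 1), α * (hc g i k * β ^ k * hc g j k))
        + (∑ k ∈ range (M + 1), β * hc g i (k + 1) * β ^ k * hc g j k) := by
    rw [← sum_add_distrib, ← sum_add_distrib]
    refine sum_congr rfl fun k _ => ?_
    rw [hc_rec hg]; ring
  have hR : ∑ k ∈ range (M + 1), hc g i k * β ^ k * hc g (j + 1) k
      = (∑ k ∈ range (M + 1), hc g i k * β ^ k * (β * hc g j (k + 1)))
        + (∑ k ∈ range (M + 1), α * (hc g i k * β ^ k * hc g j k))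
        + (∑ k ∈ range (M + 1), hc g i k * β ^ k * (if k = 0 then 0 else hc g j (k - 1))) := by
    rw [← sum_add_distrib, ← sum_add_distrib]
    refine sum_congr rfl fun k _ => ?_
    rw [hc_rec hg]; ring
  have e1 : ∑ k ∈ range (M + 1), (if k = 0 then 0 else hc g i (k - 1)) * β ^ k * hc g j k
      = ∑ k ∈ range (M + 1), hc g i k * β ^ k * (β * hc g j (k + 1)) := by
    have lhs_eq : ∑ k ∈ range (M + 1), (if k = 0 then 0 else hc g i (k - 1)) * β ^ k * hc g j k
        = ∑ k ∈ range M, hc g i k * β ^ (k + 1) * hc g j (k + 1) := by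
      rw [Finset.sum_range_succ'
        (fun k => (if k = 0 then 0 else hc g i (k - 1)) * β ^ k * hc g j k) M]
      have h0 : (if (0 : ℕ) = 0 then (0 : K) else hc g i (0 - 1)) * β ^ 0 * hc g j 0 = 0 := by
        simp
      rw [h0, add_zero]
      refine sum_congr rfl fun k _ => ?_
      rw [if_neg (Nat.succ_ne_zero k), Nat.add_sub_cancel]
    have rhs_eq : ∑ k ∈ range (M + 1), hc g i k * β ^ k * (β * hc g j (k + 1))
        = ∑ k ∈ range M, hc g i k * β ^ (k + 1) * hc g j (k + 1) := by
      rw [Finset.sum_range_succ, hc_eq_zero g (show j < M + 1 by omega), mul_zero, mul_zero,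
        add_zero]
      refine sum_congr rfl fun k _ => ?_
      ring
    rw [lhs_eq, rhs_eq]
  have e2 : ∑ k ∈ range (M + 1), β * hc g i (k + 1) * β ^ k * hc g j k
      = ∑ k ∈ range (M + 1), hc g i k * β ^ k * (if k = 0 then 0 else hc g j (k - 1)) := by
    have lhs_eq : ∑ k ∈ range (M + 1), β * hc g i (k + 1) * β ^ k * hc g j k
        = ∑ k ∈ range M, hc g i (k + 1) * β ^ (k + 1) * hc g j k := by
      rw [Finset.sum_range_succ, hc_eq_zero g (show i < M + 1 by omega), mul_zero, zero_mul,
        zero_mul, add_zero]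
      refine sum_congr rfl fun k _ => ?_
      ring
    have rhs_eq : ∑ k ∈ range (M + 1), hc g i k * β ^ k * (if k = 0 then 0 else hc g j (k - 1))
        = ∑ k ∈ range M, hc g i (k + 1) * β ^ (k + 1) * hc g j k := by
      rw [Finset.sum_range_succ'
        (fun k => hc g i k * β ^ k * (if k = 0 then 0 else hc g j (k - 1))) M]
      have h0 : hc g i 0 * β ^ 0 * (if (0 : ℕ) = 0 then (0 : K) else hc g j (0 - 1)) = 0 := by
        simp
      rw [h0, add_zero]
      refine sum_congr rfl fun k _ => ?_
      rw [if_neg (Nat.succ_ne_zero k), Nat.add_sub_cancel]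
    rw [lhs_eq, rhs_eq]
  rw [hL, hR, e1, e2]

lemma hc_main {K : Type*} [Field K] {α β : K} {g : K⟦X⟧}
    (hg0 : constantCoeff g = 1)
    (hg : g * (1 - C α * X - C β * X ^ 2 * g) = 1) (M : ℕ) :
    ∀ i j, i + j ≤ M →
      ∑ k ∈ range (M + 1), hc g i k * β ^ k * hc g j k = coeff (i + j) g := by
  intro i
  induction i with
  | zero =>
    intro j hj
    rw [Finset.sum_eq_single_of_mem 0 (by simp) (fun k _ hk => by
      rw [hc_zero_left hg0, if_neg hk]; ring)]
    rw [hc_diag hg0 0, hc_zero_right]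
    simp
  | succ i ih =>
    intro j hj
    rw [hc_swap hg M i j (by omega) (by omega), ih (j + 1) (by omega),
      show i + (j + 1) = i + 1 + j from by omega]

theorem hankel_jacobi_constant {K : Type*} [Field K] (α β : K) (g : K⟦X⟧)
    (hg0 : constantCoeff g = 1)
    (hg : g * (1 - C α * X - C β * X ^ 2 * g) = 1) (n : ℕ) :
    Matrix.det (Matrix.of fun i j : Fin (n + 1) => coeff ((i : ℕ) + (j : ℕ)) g)
      = β ^ ((n + 1).choose 2) := by
  classical
  set P : Matrix (Fin (n + 1)) (Fin (n + 1)) K := Matrix.of fun i k => hc g (i : ℕ) (k : ℕ)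
    with hP
  set D : Matrix (Fin (n + 1)) (Fin (n + 1)) K :=
    Matrix.diagonal fun k : Fin (n + 1) => β ^ (k : ℕ) with hD
  have hH : (Matrix.of fun i j : Fin (n + 1) => coeff ((i : ℕ) + (j : ℕ)) g)
      = P * D * P.transpose := by
    ext i j
    rw [Matrix.mul_apply]
    simp only [Matrix.mul_diagonal, Matrix.transpose_apply, hP, hD, Matrix.of_apply]
    have hrange : ∑ k : Fin (n + 1), hc g (i : ℕ) (k : ℕ) * β ^ (k : ℕ) * hc g (j : ℕ) (k : ℕ)
        = ∑ k ∈ range (n + 1), hc g (i : ℕ) k * β ^ k * hc g (j : ℕ) k :=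
      Fin.sum_univ_eq_sum_range (fun k => hc g (i : ℕ) k * β ^ k * hc g (j : ℕ) k) (n + 1)
    have hext : ∑ k ∈ range (n + 1), hc g (i : ℕ) k * β ^ k * hc g (j : ℕ) k
        = ∑ k ∈ range (2 * n + 1), hc g (i : ℕ) k * β ^ k * hc g (j : ℕ) k := by
      refine Finset.sum_subset (fun x hx => ?_) (fun k hk hk' => ?_)
      · simp only [mem_range] at *
        omega
      · have hik : (i : ℕ) < k := by
          have := i.isLt
          simp only [mem_range] at hk'
          omega
        rw [hc_eq_zero g hik]
        ring
    rw [hrange, hext,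
      hc_main hg0 hg (2 * n) (i : ℕ) (j : ℕ) (by have := i.isLt; have := j.isLt; omega)]
  rw [hH, Matrix.det_mul, Matrix.det_mul, Matrix.det_transpose]
  have hPdet : P.det = 1 := by
    rw [Matrix.det_of_lowerTriangular P (fun i j hij => by
      exact hc_eq_zero g (show (i : ℕ) < (j : ℕ) from hij))]
    simp [hP, hc_diag hg0]
  have hDdet : D.det = β ^ ((n + 1).choose 2) := by
    rw [hD, Matrix.det_diagonal, Finset.prod_pow_eq_pow_sum]
    congr 1
    rw [Fin.sum_univ_eq_sum_range (fun k => k) (n + 1), Nat.choose_two_right]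
    have h2 := Finset.sum_range_id_mul_two (n + 1)
    omega
  rw [hPdet, hDdet]
  ring
end

section
/- Lagrange inversion for Rev: for a power series g with g(0) invertible, the n-th coefficient of Rev(g) equals (1/(n+1)) times the n-th coefficient of 1/g(x)^{n+1}. -/
open PowerSeries

namespace LagrangeAux

variable {K : Type*} [Field K]

lemma coeff_XR_pow (R : K⟦X⟧) (k p : ℕ) :
    coeff p ((X * R) ^ k) = if k ≤ p then coeff (p - k) (R ^ k) else 0 := by
  rw [mul_pow, coeff_X_pow_mul']

/-- Extend the truncation range in the definition of `psComp`. -/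
lemma coeff_psComp_ext (A R : K⟦X⟧) {n N : ℕ} (h : n ≤ N) :
    coeff n (psComp A (X * R)) =
      ∑ k ∈ Finset.range (N + 1), coeff k A * coeff n ((X * R) ^ k) := by
  rw [psComp, coeff_mk]
  refine Finset.sum_subset (Finset.range_subset_range.2 (by omega)) ?_
  intro k hk hnk
  have hkn : n < k := by
    simp only [Finset.mem_range] at hk hnk; omega
  rw [coeff_XR_pow, if_neg (by omega), mul_zero]

lemma psComp_mul (a b R : K⟦X⟧) :
    psComp (a * b) (X * R) = psComp a (X * R) * psComp b (X * R) := by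
  ext n
  set F := X * R with hF
  have key : ∀ p : ℕ × ℕ, p.1 + p.2 > n →
      (coeff n) (F ^ (p.1 + p.2)) = 0 := by
    intro p hp
    rw [hF, coeff_XR_pow, if_neg (by omega)]
  calc coeff n (psComp (a * b) F)
      = ∑ k ∈ Finset.range (n + 1), (∑ p ∈ Finset.HasAntidiagonal.antidiagonal k,
          coeff p.1 a * coeff p.2 b * coeff n (F ^ (p.1 + p.2))) := by
        rw [psComp, coeff_mk]
        refine Finset.sum_congr rfl fun k _ => ?_
        rw [coeff_mul, Finset.sum_mul]
        refine Finset.sum_congr rfl fun p hp => ?_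
        rw [Finset.HasAntidiagonal.mem_antidiagonal] at hp
        rw [hp]
    _ = ∑ p ∈ (Finset.range (n + 1)).biUnion Finset.HasAntidiagonal.antidiagonal,
          coeff p.1 a * coeff p.2 b * coeff n (F ^ (p.1 + p.2)) := by
        rw [Finset.sum_biUnion]
        intro x hx y hy hxy
        simp only [Finset.disjoint_left, Finset.HasAntidiagonal.mem_antidiagonal]
        intro p hpx hpy
        exact hxy (hpx ▸ hpy)
    _ = ∑ p ∈ Finset.range (n + 1) ×ˢ Finset.range (n + 1),
          coeff p.1 a * coeff p.2 b * coeff n (F ^ (p.1 + p.2)) := by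
        refine Finset.sum_subset ?_ ?_
        · intro p hp
          simp only [Finset.mem_biUnion, Finset.mem_range,
            Finset.HasAntidiagonal.mem_antidiagonal] at hp
          obtain ⟨k, hk, hpk⟩ := hp
          simp only [Finset.mem_product, Finset.mem_range]
          omega
        · intro p hp hnp
          have : p.1 + p.2 > n := by
            by_contra hle
            push_neg at hle
            exact hnp (Finset.mem_biUnion.2 ⟨p.1 + p.2,
              Finset.mem_range.2 (by omega), Finset.HasAntidiagonal.mem_antidiagonal.2 rfl⟩)
          rw [key p this, mul_zero]
    _ = ∑ i ∈ Finset.range (n + 1), ∑ l ∈ Finset.range (n + 1),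
          coeff i a * coeff l b *
            ∑ p ∈ Finset.HasAntidiagonal.antidiagonal n, coeff p.1 (F ^ i) * coeff p.2 (F ^ l) := by
        rw [Finset.sum_product]
        refine Finset.sum_congr rfl fun i _ => Finset.sum_congr rfl fun l _ => ?_
        rw [← coeff_mul, ← pow_add]
    _ = ∑ i ∈ Finset.range (n + 1), ∑ p ∈ Finset.HasAntidiagonal.antidiagonal n,
          ∑ l ∈ Finset.range (n + 1),
          coeff i a * coeff l b * (coeff p.1 (F ^ i) * coeff p.2 (F ^ l)) := by
        refine Finset.sum_congr rfl fun i _ => ?_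
        simp_rw [Finset.mul_sum]
        exact Finset.sum_comm
    _ = ∑ p ∈ Finset.HasAntidiagonal.antidiagonal n, ∑ i ∈ Finset.range (n + 1),
          ∑ l ∈ Finset.range (n + 1),
          coeff i a * coeff l b * (coeff p.1 (F ^ i) * coeff p.2 (F ^ l)) :=
        Finset.sum_comm
    _ = coeff n (psComp a F * psComp b F) := by
        rw [coeff_mul]
        refine Finset.sum_congr rfl fun p hp => ?_
        rw [Finset.HasAntidiagonal.mem_antidiagonal] at hp
        rw [coeff_psComp_ext a R (show p.1 ≤ n by omega),
          coeff_psComp_ext b R (show p.2 ≤ n by omega), Finset.sum_mul_sum]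
        refine Finset.sum_congr rfl fun i _ => Finset.sum_congr rfl fun l _ => by ring

lemma psComp_one (R : K⟦X⟧) : psComp (1 : K⟦X⟧) (X * R) = 1 := by
  ext n
  rw [psComp, coeff_mk]
  rw [Finset.sum_eq_single 0]
  · simp
  · intro k hk hk0
    rw [coeff_one, if_neg hk0, zero_mul]
  · intro h
    simp at h

lemma psComp_X (R : K⟦X⟧) : psComp (X : K⟦X⟧) (X * R) = X * R := by
  ext n
  rw [psComp, coeff_mk]
  rcases Nat.eq_zero_or_pos n with hn | hn
  · subst hn
    simp [coeff_XR_pow]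
  · rw [Finset.sum_eq_single 1]
    · simp
    · intro k hk hk1
      rw [coeff_X, if_neg hk1, zero_mul]
    · intro h
      simp only [Finset.mem_range] at h
      omega

lemma psComp_pow (a R : K⟦X⟧) (k : ℕ) :
    psComp (a ^ k) (X * R) = (psComp a (X * R)) ^ k := by
  induction k with
  | zero => simpa using psComp_one R
  | succ k ih => rw [pow_succ, pow_succ, psComp_mul, ih]

/-- The change-of-variables / residue computation at the heart of Lagrange inversion. -/
lemma CoV [CharZero K] (A R : K⟦X⟧) (hR0 : constantCoeff R ≠ 0) (n : ℕ) :
    coeff n (psComp A (X * R) * ((R⁻¹) ^ (n + 1) * d⁄dX K (X * R))) = coeff n A := by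
  set u := R⁻¹ with hu
  have hRu : R * u = 1 := PowerSeries.mul_inv_cancel R hR0
  have hF' : d⁄dX K (X * R) = R + X * d⁄dX K R := by
    rw [Derivation.leibniz]
    simp only [derivative_X, smul_eq_mul, mul_one]
    ring
  set B := u ^ (n + 1) * d⁄dX K (X * R) with hB
  -- the key coefficient computation
  have core : ∀ j ≤ n, coeff n ((X * R) ^ j * B) = if j = n then 1 else 0 := by
    intro j hj
    set d := n + 1 - j with hdd
    have hd : n + 1 = j + d := by omega
    have hd1 : 1 ≤ d := by omega
    have h3 : u ^ (d - 1) * u = u ^ d := by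
      rw [← pow_succ]; congr 1; omega
    have hring : (X * R) ^ j * B = X ^ j * (u ^ (d - 1) + X * (u ^ d * d⁄dX K R)) := by
      rw [hB, hF', mul_pow]
      have h1 : R ^ j * u ^ (n + 1) = u ^ d := by
        rw [hd, pow_add, ← mul_assoc, ← mul_pow, hRu, one_pow, one_mul]
      have h2 : u ^ d * R = u ^ (d - 1) := by
        rw [← h3, mul_assoc, mul_comm u R, hRu, mul_one]
      calc X ^ j * R ^ j * (u ^ (n + 1) * (R + X * d⁄dX K R))
          = X ^ j * (R ^ j * u ^ (n + 1) * R + X * (R ^ j * u ^ (n + 1) * d⁄dX K R)) := by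
            ring
        _ = X ^ j * (u ^ (d - 1) + X * (u ^ d * d⁄dX K R)) := by
            rw [h1, h2]
    rw [hring, coeff_X_pow_mul', if_pos (by omega)]
    have hnj : n - j = d - 1 := by omega
    rw [hnj, map_add]
    rcases eq_or_lt_of_le hd1 with hd1' | hd2
    · -- d = 1, i.e. j = n
      have hjn : j = n := by omega
      rw [← hd1', if_pos hjn]
      simp
    · -- d ≥ 2, i.e. j < n
      have hjn : j ≠ n := by omega
      rw [if_neg hjn]
      have hXc : coeff (d - 1) (X * (u ^ d * d⁄dX K R)) =
          coeff (d - 2) (u ^ d * d⁄dX K R) := by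
        rw [show d - 1 = (d - 2) + 1 by omega, coeff_succ_X_mul]
      rw [hXc]
      have h4 : u ^ (d - 1 - 1) * u ^ 2 = u ^ d := by
        rw [← pow_add]; congr 1; omega
      have hderiv : d⁄dX K (u ^ (d - 1)) =
          C (-((d - 1 : ℕ) : K)) * (u ^ d * d⁄dX K R) := by
        rw [Derivation.leibniz_pow]
        have hu' : d⁄dX K u = -u ^ 2 * d⁄dX K R := by
          rw [hu]; exact derivative_inv' R
        rw [hu']
        simp only [smul_eq_mul, nsmul_eq_mul, map_neg, map_natCast]
        rw [← h4]; ring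
      have hcd : coeff (d - 2) (d⁄dX K (u ^ (d - 1))) =
          coeff (d - 1) (u ^ (d - 1)) * ((d - 1 : ℕ) : K) := by
        rw [show d - 1 = (d - 2) + 1 by omega, coeff_derivative]
        push_cast
        ring
      have hE : coeff (d - 1) (u ^ (d - 1)) * ((d - 1 : ℕ) : K) =
          -((d - 1 : ℕ) : K) * coeff (d - 2) (u ^ d * d⁄dX K R) := by
        rw [← hcd, hderiv, coeff_C_mul]
      have hne : ((d - 1 : ℕ) : K) ≠ 0 := Nat.cast_ne_zero.2 (by omega)
      have h5 : ((d - 1 : ℕ) : K) *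
          (coeff (d - 1) (u ^ (d - 1)) + coeff (d - 2) (u ^ d * d⁄dX K R)) = 0 := by
        linear_combination hE
      exact (mul_eq_zero.1 h5).resolve_left hne
  -- assemble
  calc coeff n (psComp A (X * R) * B)
      = ∑ p ∈ Finset.HasAntidiagonal.antidiagonal n, ∑ j ∈ Finset.range (n + 1),
          coeff j A * coeff p.1 ((X * R) ^ j) * coeff p.2 B := by
        rw [coeff_mul]
        refine Finset.sum_congr rfl fun p hp => ?_
        rw [Finset.HasAntidiagonal.mem_antidiagonal] at hp
        rw [coeff_psComp_ext A R (show p.1 ≤ n by omega), Finset.sum_mul]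
    _ = ∑ j ∈ Finset.range (n + 1), ∑ p ∈ Finset.HasAntidiagonal.antidiagonal n,
          coeff j A * coeff p.1 ((X * R) ^ j) * coeff p.2 B :=
        Finset.sum_comm
    _ = ∑ j ∈ Finset.range (n + 1), coeff j A * coeff n ((X * R) ^ j * B) := by
        refine Finset.sum_congr rfl fun j _ => ?_
        rw [coeff_mul, Finset.mul_sum]
        exact Finset.sum_congr rfl fun p _ => by ring
    _ = ∑ j ∈ Finset.range (n + 1), coeff j A * if j = n then 1 else 0 := by
        refine Finset.sum_congr rfl fun j hj => ?_
        rw [core j (by simpa [Nat.lt_succ_iff] using hj)]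
    _ = coeff n A := by
        simp only [mul_ite, mul_one, mul_zero, Finset.sum_ite_eq', Finset.mem_range]
        rw [if_pos (by omega)]

end LagrangeAux

theorem lagrange_inversion_rev {K : Type*} [Field K] [CharZero K] (g Rg : K⟦X⟧)
    (h0 : constantCoeff g ≠ 0)
    (hR : psComp (X * g) (X * Rg) = X) (n : ℕ) :
    coeff n Rg = ((n : K) + 1)⁻¹ * coeff n (g⁻¹ ^ (n + 1)) := by
  have hsplit : psComp (X * g) (X * Rg) = (X * Rg) * psComp g (X * Rg) := by
    rw [LagrangeAux.psComp_mul, LagrangeAux.psComp_X]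
  have h1 : X * (Rg * psComp g (X * Rg)) = X * 1 := by
    rw [mul_one, ← mul_assoc, ← hsplit, hR]
  have hRS : Rg * psComp g (X * Rg) = 1 := mul_left_cancel₀ PowerSeries.X_ne_zero h1
  have hR0 : constantCoeff Rg ≠ 0 := by
    have h2 := congrArg constantCoeff hRS
    rw [map_mul, map_one] at h2
    exact left_ne_zero_of_mul_eq_one h2
  have hRgne : Rg ≠ 0 := fun h => hR0 (by rw [h, map_zero])
  have hRinv : Rg * Rg⁻¹ = 1 := PowerSeries.mul_inv_cancel Rg hR0
  have hS : psComp g (X * Rg) = Rg⁻¹ := mul_left_cancel₀ hRgne (hRS.trans hRinv.symm)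
  have hginv : psComp g⁻¹ (X * Rg) = Rg := by
    have hmul : psComp g⁻¹ (X * Rg) * psComp g (X * Rg) = 1 := by
      rw [← LagrangeAux.psComp_mul, PowerSeries.inv_mul_cancel g h0, LagrangeAux.psComp_one]
    rw [hS] at hmul
    have hinvne : (Rg⁻¹ : K⟦X⟧) ≠ 0 := right_ne_zero_of_mul_eq_one hRinv
    exact mul_right_cancel₀ hinvne (hmul.trans hRinv.symm)
  have hA : psComp (g⁻¹ ^ (n + 1)) (X * Rg) = Rg ^ (n + 1) := by
    rw [LagrangeAux.psComp_pow, hginv]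
  have hCoV := LagrangeAux.CoV (g⁻¹ ^ (n + 1)) Rg hR0 n
  rw [hA] at hCoV
  have hcollapse : Rg ^ (n + 1) * ((Rg⁻¹) ^ (n + 1) * d⁄dX K (X * Rg)) =
      d⁄dX K (X * Rg) := by
    rw [← mul_assoc, ← mul_pow, hRinv, one_pow, one_mul]
  rw [hcollapse] at hCoV
  have hder : coeff n (d⁄dX K (X * Rg)) = coeff n Rg * ((n : K) + 1) := by
    rw [coeff_derivative, coeff_succ_X_mul]
  rw [hder] at hCoV
  have hne : (n : K) + 1 ≠ 0 := Nat.cast_add_one_ne_zero n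
  rw [← hCoV]
  field_simp
end

section
/- The generating function of the spidernet S(a,b,c), defined as the Jacobi continued fraction g = 1/(1 − a·x²·G) with G = 1/(1 − (b−1−c)x − c·x²·G), satisfies the closed form: g·(a·√(x²(b² − 2b(c+1) + (c−1)²) − 2x(b−1−c) + 1) + ax(b−1−c) − a + 2c) = 2c, where the square root denotes the power series square root with constant term 1 of the quadratic polynomial. -/
open PowerSeries

theorem spidernet_closed_form {K : Type*} [Field K] [CharZero K] (a b c : K) (G S : K⟦X⟧)
    (hG0 : constantCoeff G = 1)
    (hG : G * (1 - C (b - 1 - c) * X - C c * X ^ 2 * G) = 1)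
    (hS0 : constantCoeff S = 1)
    (hS : S ^ 2 = C (b ^ 2 - 2 * b * (c + 1) + (c - 1) ^ 2) * X ^ 2
        - C (2 * (b - 1 - c)) * X + 1) :
    (1 - C a * X ^ 2 * G)⁻¹
        * (C a * S + C (a * (b - 1 - c)) * X - C a + C (2 * c))
      = C (2 * c) := by
  set T : K⟦X⟧ := 1 - C (b - 1 - c) * X - C (2 * c) * X ^ 2 * G with hTdef
  have hT2 : T ^ 2 = S ^ 2 := by
    rw [hS, hTdef]
    simp only [map_sub, map_add, map_mul, map_pow, map_one, map_ofNat] at hG ⊢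
    linear_combination (-4 * C c * X ^ 2) * hG
  have hST : S = T := by
    have hfac : (S - T) * (S + T) = 0 := by linear_combination -hT2
    rcases mul_eq_zero.mp hfac with h | h
    · exact sub_eq_zero.mp h
    · exact absurd h (by
        intro h0
        have : constantCoeff (S + T) = 0 := by rw [h0]; simp
        rw [map_add, hS0, hTdef] at this
        simp at this)
    -- fallback
  have hfact : C a * S + C (a * (b - 1 - c)) * X - C a + C (2 * c)
      = C (2 * c) * (1 - C a * X ^ 2 * G) := by
    rw [hST, hTdef]
    simp only [map_mul, map_sub, map_one]
    ring
  rw [hfact, ← mul_assoc, mul_comm ((1 - C a * X ^ 2 * G)⁻¹) (C (2 * c)), mul_assoc,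
    PowerSeries.inv_mul_cancel _ (by simp), mul_one]
end
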